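/- Let K be a field of characteristic zero and let a, b, c be 2×2 matrices over K satisfying a+b+c = 0, a²+b²+c² = 0, a³+b³+c³ = 0. Then a, b, c pairwise commute. -/
import Mathlib


set_option maxHeartbeats 2000000 in
theorem stmt4 {K : Type*} [Field K] [CharZero K]
    (a b c : Matrix (Fin 2) (Fin 2) K)
    (h1 : a + b + c = 0)
    (h2 : a ^ 2 + b ^ 2 + c ^ 2 = 0)
    (h3 : a ^ 3 + b ^ 3 + c ^ 3 = 0) :
    a * b = b * a ∧ a * c = c * a ∧ b * c = c * b := by
  have hc : c = -(a + b) := eq_neg_of_add_eq_zero_right h1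
  subst hc
  have p00 := congrFun (congrFun h2 0) 0
  have p01 := congrFun (congrFun h2 0) 1
  have p10 := congrFun (congrFun h2 1) 0
  have p11 := congrFun (congrFun h2 1) 1
  have q00 := congrFun (congrFun h3 0) 0
  have q01 := congrFun (congrFun h3 0) 1
  have q10 := congrFun (congrFun h3 1) 0
  have q11 := congrFun (congrFun h3 1) 1
  simp only [pow_succ, pow_zero, one_mul, Matrix.add_apply, Matrix.neg_apply,
    Matrix.mul_apply, Matrix.zero_apply, Fin.sum_univ_two] at p00 p01 p10 p11 q00 q01 q10 q11
  have k00 : (a * b) 0 0 - (b * a) 0 0 = 0 := by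
    have key : ((a * b) 0 0 - (b * a) 0 0) ^ 3 = 0 := by
      simp only [Matrix.mul_apply, Fin.sum_univ_two]
      linear_combination (((1 : K)/12) * b 0 1 * b 1 0 * b 1 1 * b 1 1 + ((-15 : K)/4) * b 0 1 * b 0 1 * b 1 0 * b 1 0 + ((49 : K)/12) * b 0 0 * b 0 1 * b 1 0 * b 1 1 + ((1 : K)/4) * b 0 0 * b 0 0 * b 0 1 * b 1 0 + ((-1 : K)/4) * a 1 1 * b 0 1 * b 1 0 * b 1 1 + ((23 : K)/12) * a 1 1 * b 0 0 * b 0 1 * b 1 0 + ((2 : K)/3) * a 1 1 * a 1 1 * b 0 1 * b 1 0 + ((17 : K)/12) * a 1 0 * b 0 1 * b 1 1 * b 1 1 + (-1 : K) * a 1 0 * b 0 1 * b 0 1 * b 1 0 + (1 : K) * a 1 0 * b 0 0 * b 0 1 * b 1 1 + ((1 : K)/2) * a 1 0 * a 1 1 * b 0 1 * b 1 1 + ((-1 : K)/2) * a 1 0 * a 1 1 * b 0 0 * b 0 1 + ((1 : K)/3) * a 1 0 * a 1 1 * a 1 1 * b 0 1 + ((-7 : K)/6) * a 0 1 * b 1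 0 * b 1 1 * b 1 1 + ((-13 : K)/2) * a 0 1 * b 0 1 * b 1 0 * b 1 0 + ((47 : K)/12) * a 0 1 * b 0 0 * b 1 0 * b 1 1 + (2 : K) * a 0 1 * b 0 0 * b 0 0 * b 1 0 + ((-5 : K)/6) * a 0 1 * a 1 1 * b 1 0 * b 1 1 + ((5 : K)/6) * a 0 1 * a 1 1 * b 0 0 * b 1 0 + (1 : K) * a 0 1 * a 1 1 * a 1 1 * b 1 0 + ((-5 : K)/6) * a 0 1 * a 1 0 * b 1 1 * b 1 1 + ((1 : K)/2) * a 0 1 * a 1 0 * b 0 0 * b 1 1 + ((-5 : K)/3) * a 0 1 * a 1 0 * a 1 1 * b 1 1 + (1 : K) * a 0 1 * a 1 0 * a 1 1 * b 0 0 + ((7 : K)/6) * a 0 0 * b 0 1 * b 1 0 * b 1 1 + ((-3 : K)/2) * a 0 0 * b 0 0 * b 0 1 * b 1 0 + ((-2 : K)/3) * a 0 0 * a 1 1 * b 0 1 * b 1 0 + ((-1 : K)/2) * a 0 0 * a 1 0 * b 0 1 * b 1 1 + (-1 : K) * a 0 0 * a 1 0 * a 1 1 * b 0 1 + ((-1 :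 K)/6) * a 0 0 * a 0 1 * b 1 0 * b 1 1 + ((-1 : K)/3) * a 0 0 * a 0 1 * a 1 1 * b 1 0) * p00 + (((41 : K)/12) * b 1 0 * b 1 1 * b 1 1 * b 1 1 + ((21 : K)/4) * b 0 1 * b 1 0 * b 1 0 * b 1 1 + ((3 : K)/4) * b 0 0 * b 1 0 * b 1 1 * b 1 1 + ((23 : K)/6) * b 0 0 * b 0 1 * b 1 0 * b 1 0 + ((-5 : K)/4) * b 0 0 * b 0 0 * b 1 0 * b 1 1 + ((-1 : K)/3) * a 1 1 * b 1 0 * b 1 1 * b 1 1 + ((-14 : K)/3) * a 1 1 * b 0 1 * b 1 0 * b 1 0 + ((15 : K)/4) * a 1 1 * b 0 0 * b 1 0 * b 1 1 + ((-1 : K)/2) * a 1 1 * b 0 0 * b 0 0 * b 1 0 + ((2 : K)/3) * a 1 1 * a 1 1 * b 1 0 * b 1 1 + ((3 : K)/2) * a 1 1 * a 1 1 * b 0 0 * b 1 0 + (1 : K) * a 1 1 * a 1 1 * a 1 1 * b 1 0 + ((22 : K)/3) * a 1 0 * b 1 1 * b 1 1 * b 1 1 + ((73 : K)/6) * a 1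 0 * b 0 1 * b 1 0 * b 1 1 + (-3 : K) * a 1 0 * b 0 0 * b 1 1 * b 1 1 + ((5 : K)/6) * a 1 0 * b 0 0 * b 0 1 * b 1 0 + ((1 : K)/3) * a 1 0 * a 1 1 * b 1 1 * b 1 1 + ((-10 : K)/3) * a 1 0 * a 1 1 * b 0 1 * b 1 0 + ((1 : K)/3) * a 1 0 * a 1 1 * a 1 1 * b 1 1 + (2 : K) * a 1 0 * a 1 1 * a 1 1 * b 0 0 + ((-1 : K)/6) * a 1 0 * a 1 0 * b 0 1 * b 1 1 + ((-1 : K)/6) * a 1 0 * a 1 0 * b 0 0 * b 0 1 + (-2 : K) * a 1 0 * a 1 0 * a 1 1 * b 0 1 + (2 : K) * a 0 1 * b 1 0 * b 1 0 * b 1 1 + ((5 : K)/3) * a 0 1 * b 0 0 * b 1 0 * b 1 0 + ((-1 : K)/3) * a 0 1 * a 1 1 * b 1 0 * b 1 0 + ((4 : K)/3) * a 0 1 * a 1 0 * b 1 0 * b 1 1 + ((-4 : K)/3) * a 0 1 * a 1 0 * b 0 0 * b 1 0 + ((-2 : K)/3) * a 0 1 * a 1 0 * a 1 1 * b 1 0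 + ((5 : K)/3) * a 0 1 * a 1 0 * a 1 0 * b 1 1 + ((-4 : K)/3) * a 0 1 * a 1 0 * a 1 0 * b 0 0 + ((5 : K)/4) * a 0 0 * b 1 0 * b 1 1 * b 1 1 + (5 : K) * a 0 0 * b 0 1 * b 1 0 * b 1 0 + ((-5 : K)/2) * a 0 0 * b 0 0 * b 1 0 * b 1 1 + ((1 : K)/2) * a 0 0 * a 1 1 * b 1 0 * b 1 1 + (-1 : K) * a 0 0 * a 1 1 * b 0 0 * b 1 0 + (1 : K) * a 0 0 * a 1 0 * b 0 1 * b 1 0 + (1 : K) * a 0 0 * a 1 0 * a 1 0 * b 0 1) * p01 + (((-10 : K)/3) * b 0 1 * b 1 1 * b 1 1 * b 1 1 + (-9 : K) * b 0 1 * b 0 1 * b 1 0 * b 1 1 + ((13 : K)/4) * b 0 0 * b 0 1 * b 1 1 * b 1 1 + ((-1 : K)/12) * b 0 0 * b 0 1 * b 0 1 * b 1 0 + ((-31 : K)/12) * b 0 0 * b 0 0 * b 0 1 * b 1 1 + ((-1 : K)/4) * b 0 0 * b 0 0 * b 0 0 * b 0 1 + ((8 : K)/3) * a 1 1 * b 0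 1 * b 0 1 * b 1 0 + ((2 : K)/3) * a 1 1 * b 0 0 * b 0 1 * b 1 1 + ((-17 : K)/12) * a 1 1 * b 0 0 * b 0 0 * b 0 1 + ((1 : K)/2) * a 1 1 * a 1 1 * b 0 1 * b 1 1 + ((-13 : K)/6) * a 1 1 * a 1 1 * b 0 0 * b 0 1 + ((1 : K)/3) * a 1 1 * a 1 1 * a 1 1 * b 0 1 + ((-53 : K)/12) * a 1 0 * b 0 1 * b 0 1 * b 1 1 + ((13 : K)/12) * a 1 0 * b 0 0 * b 0 1 * b 0 1 + (1 : K) * a 1 0 * a 1 1 * b 0 1 * b 0 1 + (-7 : K) * a 0 1 * b 1 1 * b 1 1 * b 1 1 + ((-61 : K)/4) * a 0 1 * b 0 1 * b 1 0 * b 1 1 + ((16 : K)/3) * a 0 1 * b 0 0 * b 1 1 * b 1 1 + ((23 : K)/12) * a 0 1 * b 0 0 * b 0 1 * b 1 0 + ((-2 : K)/3) * a 0 1 * b 0 0 * b 0 0 * b 1 1 + (-2 : K) * a 0 1 * b 0 0 * b 0 0 * b 0 0 + (-2 : K) * a 0 1 * a 1 1 * b 1 1 * b 1 1 + ((8 :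 K)/3) * a 0 1 * a 1 1 * b 0 1 * b 1 0 + ((5 : K)/3) * a 0 1 * a 1 1 * b 0 0 * b 1 1 + ((-1 : K)/3) * a 0 1 * a 1 1 * b 0 0 * b 0 0 + (-2 : K) * a 0 1 * a 1 1 * a 1 1 * b 1 1 + (-1 : K) * a 0 1 * a 1 1 * a 1 1 * b 0 0 + ((-2 : K)/3) * a 0 1 * a 1 0 * b 0 1 * b 1 1 + ((5 : K)/6) * a 0 1 * a 1 0 * b 0 0 * b 0 1 + (2 : K) * a 0 1 * a 1 0 * a 1 1 * b 0 1 + ((-1 : K)/2) * a 0 1 * a 0 1 * b 1 0 * b 1 1 + ((2 : K)/3) * a 0 1 * a 0 1 * b 0 0 * b 1 0 + ((2 : K)/3) * a 0 1 * a 0 1 * a 1 1 * b 1 0 + ((-5 : K)/3) * a 0 1 * a 0 1 * a 1 0 * b 1 1 + ((4 : K)/3) * a 0 1 * a 0 1 * a 1 0 * b 0 0 + (-3 : K) * a 0 0 * b 0 1 * b 0 1 * b 1 0 + ((-29 : K)/12) * a 0 0 * b 0 0 * b 0 1 * b 1 1 + ((3 : K)/2) * a 0 0 * b 0 0 * b 0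 0 * b 0 1 + ((-13 : K)/6) * a 0 0 * a 1 1 * b 0 1 * b 1 1 + ((5 : K)/3) * a 0 0 * a 1 1 * b 0 0 * b 0 1 + ((-7 : K)/3) * a 0 0 * a 1 1 * a 1 1 * b 0 1 + ((-1 : K)/2) * a 0 0 * a 1 0 * b 0 1 * b 0 1 + ((2 : K)/3) * a 0 0 * a 0 1 * b 1 1 * b 1 1 + ((-1 : K)/2) * a 0 0 * a 0 1 * b 0 1 * b 1 0 + ((-1 : K)/3) * a 0 0 * a 0 1 * b 0 0 * b 1 1 + ((4 : K)/3) * a 0 0 * a 0 1 * a 1 1 * b 1 1 + ((-2 : K)/3) * a 0 0 * a 0 1 * a 1 1 * b 0 0 + (-1 : K) * a 0 0 * a 0 1 * a 1 0 * b 0 1 + ((1 : K)/2) * a 0 0 * a 0 0 * b 0 1 * b 1 1 + (1 : K) * a 0 0 * a 0 0 * a 1 1 * b 0 1) * p10 + (((-1 : K)/12) * b 0 1 * b 1 0 * b 1 1 * b 1 1 + ((15 : K)/4) * b 0 1 * b 0 1 * b 1 0 * b 1 0 + ((-49 : K)/12) * b 0 0 * b 0 1 * b 1 0 * b 1 1 +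 ((-1 : K)/4) * b 0 0 * b 0 0 * b 0 1 * b 1 0 + ((7 : K)/12) * a 1 1 * b 0 1 * b 1 0 * b 1 1 + ((-23 : K)/12) * a 1 1 * b 0 0 * b 0 1 * b 1 0 + ((-1 : K)/2) * a 1 1 * a 1 1 * b 0 1 * b 1 0 + ((-13 : K)/2) * a 1 0 * b 0 1 * b 1 1 * b 1 1 + (2 : K) * a 1 0 * b 0 1 * b 0 1 * b 1 0 + ((-65 : K)/12) * a 1 0 * b 0 0 * b 0 1 * b 1 1 + ((-7 : K)/6) * a 1 0 * a 1 1 * b 0 1 * b 1 1 + ((7 : K)/6) * a 1 0 * a 1 1 * b 0 0 * b 0 1 + ((-4 : K)/3) * a 1 0 * a 1 1 * a 1 1 * b 0 1 + ((71 : K)/12) * a 0 1 * b 1 0 * b 1 1 * b 1 1 + ((11 : K)/2) * a 0 1 * b 0 1 * b 1 0 * b 1 0 + ((5 : K)/6) * a 0 1 * b 0 0 * b 1 0 * b 1 1 + (-2 : K) * a 0 1 * b 0 0 * b 0 0 * b 1 0 + ((3 : K)/2) * a 0 1 * a 1 1 * b 1 0 * b 1 1 + ((-4 : K)/3) * a 0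 1 * a 1 1 * b 0 0 * b 1 0 + ((1 : K)/3) * a 0 1 * a 1 1 * a 1 1 * b 1 0 + ((2 : K)/3) * a 0 1 * a 1 0 * b 1 1 * b 1 1 + ((-1 : K)/3) * a 0 1 * a 1 0 * b 0 0 * b 1 1 + ((4 : K)/3) * a 0 1 * a 1 0 * a 1 1 * b 1 1 + ((-2 : K)/3) * a 0 1 * a 1 0 * a 1 1 * b 0 0 + ((-3 : K)/2) * a 0 0 * b 0 1 * b 1 0 * b 1 1 + ((3 : K)/2) * a 0 0 * b 0 0 * b 0 1 * b 1 0 + ((1 : K)/2) * a 0 0 * a 1 1 * b 0 1 * b 1 0 + ((1 : K)/2) * a 0 0 * a 1 0 * b 0 1 * b 1 1 + (1 : K) * a 0 0 * a 1 0 * a 1 1 * b 0 1) * p11 + (((-5 : K)/12) * b 0 1 * b 1 0 * b 1 1 + ((1 : K)/4) * b 0 0 * b 0 1 * b 1 0 + ((13 : K)/6) * a 1 1 * b 0 1 * b 1 0 + ((-11 : K)/6) * a 1 0 * b 0 1 * b 1 1 + ((4 : K)/3) * a 1 0 * a 1 1 * b 0 1 + ((-5 : K)/6) * a 0 1 * b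 1 0 * b 1 1 + (2 : K) * a 0 1 * b 0 0 * b 1 0 + ((-2 : K)/3) * a 0 1 * a 1 1 * b 1 0 + ((1 : K)/3) * a 0 1 * a 1 0 * b 1 1 + ((2 : K)/3) * a 0 1 * a 1 0 * a 1 1 + ((-3 : K)/2) * a 0 0 * b 0 1 * b 1 0) * q00 + (((5 : K)/4) * b 1 0 * b 1 1 * b 1 1 + (-2 : K) * b 0 1 * b 1 0 * b 1 0 + ((5 : K)/4) * b 0 0 * b 1 0 * b 1 1 + (-1 : K) * a 1 1 * b 1 0 * b 1 1 + ((1 : K)/2) * a 1 1 * b 0 0 * b 1 0 + (-2 : K) * a 1 1 * a 1 1 * b 1 0 + (3 : K) * a 1 0 * b 1 1 * b 1 1 + (-3 : K) * a 1 0 * b 0 1 * b 1 0 + (-2 : K) * a 1 0 * a 1 1 * a 1 1 + (-1 : K) * a 0 1 * b 1 0 * b 1 0 + ((5 : K)/2) * a 0 0 * b 1 0 * b 1 1 + (1 : K) * a 0 0 * a 1 1 * b 1 0) * q01 + (((-5 : K)/3) * b 0 1 * b 1 1 * b 1 1 + (2 : K) * b 0 1 * b 0 1 * b 1 0 + ((-7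 : K)/12) * b 0 0 * b 0 1 * b 1 1 + ((-1 : K)/4) * b 0 0 * b 0 0 * b 0 1 + ((-7 : K)/6) * a 1 1 * b 0 1 * b 1 1 + ((-8 : K)/3) * a 1 1 * b 0 0 * b 0 1 + ((7 : K)/3) * a 1 1 * a 1 1 * b 0 1 + (1 : K) * a 1 0 * b 0 1 * b 0 1 + ((-4 : K)/3) * a 0 1 * b 1 1 * b 1 1 + (3 : K) * a 0 1 * b 0 1 * b 1 0 + ((1 : K)/3) * a 0 1 * b 0 0 * b 1 1 + (-2 : K) * a 0 1 * b 0 0 * b 0 0 + ((2 : K)/3) * a 0 1 * a 1 1 * b 1 1 + ((-1 : K)/3) * a 0 1 * a 1 1 * b 0 0 + ((8 : K)/3) * a 0 1 * a 1 1 * a 1 1 + ((1 : K)/3) * a 0 0 * b 0 1 * b 1 1 + ((3 : K)/2) * a 0 0 * b 0 0 * b 0 1 + ((-4 : K)/3) * a 0 0 * a 1 1 * b 0 1 + ((-1 : K)/3) * a 0 0 * a 0 1 * b 1 1 + ((-2 : K)/3) * a 0 0 * a 0 1 * a 1 1) * q10 + (((5 : K)/12) * b 0 1 * b 1 0 * b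 1 1 + ((-1 : K)/4) * b 0 0 * b 0 1 * b 1 0 + ((11 : K)/6) * a 1 1 * b 0 1 * b 1 0 + ((-31 : K)/6) * a 1 0 * b 0 1 * b 1 1 + ((-4 : K)/3) * a 1 0 * a 1 1 * b 0 1 + ((23 : K)/6) * a 0 1 * b 1 0 * b 1 1 + (2 : K) * a 0 1 * b 0 0 * b 1 0 + ((2 : K)/3) * a 0 1 * a 1 1 * b 1 0 + ((-1 : K)/3) * a 0 1 * a 1 0 * b 1 1 + ((-2 : K)/3) * a 0 1 * a 1 0 * a 1 1 + ((-5 : K)/2) * a 0 0 * b 0 1 * b 1 0) * q11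
    exact pow_eq_zero_iff (three_ne_zero) |>.mp key
  have k01 : (a * b) 0 1 - (b * a) 0 1 = 0 := by
    have key : ((a * b) 0 1 - (b * a) 0 1) ^ 3 = 0 := by
      simp only [Matrix.mul_apply, Fin.sum_univ_two]
      linear_combination (((11 : K)/12) * b 0 1 * b 0 1 * b 0 1 * b 1 1 + ((11 : K)/12) * b 0 0 * b 0 1 * b 0 1 * b 0 1 + ((-37 : K)/24) * a 1 1 * b 0 1 * b 0 1 * b 0 1 + ((103 : K)/24) * a 0 1 * b 0 1 * b 0 1 * b 1 1 + ((71 : K)/24) * a 0 1 * b 0 0 * b 0 1 * b 0 1 + ((-1 : K)/6) * a 0 1 * a 1 1 * b 0 1 * b 0 1 + ((35 : K)/12) * a 0 1 * a 0 1 * b 0 1 * b 1 1 + ((19 : K)/12) * a 0 1 * a 0 1 * b 0 0 * b 0 1 + ((-1 : K)/6) * a 0 1 * a 0 1 * a 1 1 * b 0 1 + (2 : K) * a 0 1 * a 0 1 * a 0 1 * b 1 1 + ((2 : K)/3) * a 0 1 * a 0 1 * a 0 1 * b 0 0 + ((-5 : K)/24) * a 0 0 * b 0 1 * b 0 1 *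 b 0 1 + ((7 : K)/6) * a 0 0 * a 0 1 * b 0 1 * b 0 1 + ((7 : K)/6) * a 0 0 * a 0 1 * a 0 1 * b 0 1) * p00 + (((7 : K)/6) * b 0 1 * b 0 1 * b 1 1 * b 1 1 + ((1 : K)/4) * b 0 1 * b 0 1 * b 0 1 * b 1 0 + ((-11 : K)/12) * b 0 0 * b 0 0 * b 0 1 * b 0 1 + (-1 : K) * a 1 1 * b 0 1 * b 0 1 * b 1 1 + ((7 : K)/12) * a 1 1 * b 0 0 * b 0 1 * b 0 1 + ((1 : K)/12) * a 1 1 * a 1 1 * b 0 1 * b 0 1 + ((1 : K)/24) * a 1 0 * b 0 1 * b 0 1 * b 0 1 + ((17 : K)/4) * a 0 1 * b 0 1 * b 1 1 * b 1 1 + ((11 : K)/24) * a 0 1 * b 0 1 * b 0 1 * b 1 0 + ((-1 : K)/12) * a 0 1 * b 0 0 * b 0 1 * b 1 1 + ((-47 : K)/12) * a 0 1 * b 0 0 * b 0 0 * b 0 1 + ((11 : K)/6) * a 0 1 * a 1 1 * b 0 1 * b 1 1 + ((5 : K)/12) * a 0 1 * a 1 1 * b 0 0 * b 0 1 + ((1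 : K)/6) * a 0 1 * a 1 1 * a 1 1 * b 0 1 + ((1 : K)/6) * a 0 1 * a 1 0 * b 0 1 * b 0 1 + ((5 : K)/6) * a 0 1 * a 0 1 * b 1 1 * b 1 1 + ((-1 : K)/6) * a 0 1 * a 0 1 * b 0 1 * b 1 0 + ((-1 : K)/6) * a 0 1 * a 0 1 * b 0 0 * b 1 1 + ((-7 : K)/6) * a 0 1 * a 0 1 * b 0 0 * b 0 0 + ((5 : K)/3) * a 0 1 * a 0 1 * a 1 1 * b 1 1 + ((1 : K)/2) * a 0 1 * a 0 1 * a 1 1 * b 0 0 + ((1 : K)/6) * a 0 1 * a 0 1 * a 1 0 * b 0 1 + ((-1 : K)/6) * a 0 1 * a 0 1 * a 0 1 * b 1 0 + ((-3 : K)/4) * a 0 0 * b 0 1 * b 0 1 * b 1 1 + ((11 : K)/12) * a 0 0 * b 0 0 * b 0 1 * b 0 1 + ((-1 : K)/12) * a 0 0 * a 1 1 * b 0 1 * b 0 1 + ((-11 : K)/12) * a 0 0 * a 0 1 * b 0 1 * b 1 1 + ((-7 : K)/3) * a 0 0 * a 0 1 * b 0 0 * b 0 1 + ((-1 : K)/6)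 * a 0 0 * a 0 1 * a 1 1 * b 0 1 + ((-5 : K)/6) * a 0 0 * a 0 1 * a 0 1 * b 1 1 + ((-7 : K)/3) * a 0 0 * a 0 1 * a 0 1 * b 0 0) * p01 + (((-7 : K)/6) * b 0 1 * b 0 1 * b 0 1 * b 1 1 + ((-7 : K)/6) * b 0 0 * b 0 1 * b 0 1 * b 0 1 + ((1 : K)/12) * a 1 1 * b 0 1 * b 0 1 * b 0 1 + ((-43 : K)/12) * a 0 1 * b 0 1 * b 0 1 * b 1 1 + ((-59 : K)/12) * a 0 1 * b 0 0 * b 0 1 * b 0 1 + ((-5 : K)/3) * a 0 1 * a 1 1 * b 0 1 * b 0 1 + ((-11 : K)/6) * a 0 1 * a 0 1 * b 0 1 * b 1 1 + ((-19 : K)/6) * a 0 1 * a 0 1 * b 0 0 * b 0 1 + ((-5 : K)/3) * a 0 1 * a 0 1 * a 1 1 * b 0 1 + ((-2 : K)/3) * a 0 1 * a 0 1 * a 0 1 * b 1 1 + (-2 : K) * a 0 1 * a 0 1 * a 0 1 * b 0 0 + ((17 : K)/12) * a 0 0 * b 0 1 * b 0 1 * b 0 1 + ((-1 : K)/3) *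 a 0 0 * a 0 1 * b 0 1 * b 0 1 + ((-1 : K)/3) * a 0 0 * a 0 1 * a 0 1 * b 0 1) * p11 + (((8 : K)/3) * b 0 1 * b 0 1 * b 0 1 + (4 : K) * a 0 1 * b 0 1 * b 0 1 + (-4 : K) * a 0 1 * a 0 1 * b 0 1 + ((-8 : K)/3) * a 0 1 * a 0 1 * a 0 1) * q00 + (((5 : K)/2) * b 0 1 * b 0 1 * b 1 1 + ((-17 : K)/6) * b 0 0 * b 0 1 * b 0 1 + ((5 : K)/4) * a 1 1 * b 0 1 * b 0 1 + ((9 : K)/4) * a 0 1 * b 0 1 * b 1 1 + ((-37 : K)/12) * a 0 1 * b 0 0 * b 0 1 + (-3 : K) * a 0 1 * a 1 1 * b 0 1 + ((-3 : K)/2) * a 0 1 * a 0 1 * b 1 1 + ((7 : K)/6) * a 0 1 * a 0 1 * b 0 0 + (-3 : K) * a 0 1 * a 0 1 * a 1 1 + ((-17 : K)/12) * a 0 0 * b 0 1 * b 0 1 + ((7 : K)/3) * a 0 0 * a 0 1 * b 0 1 + ((7 : K)/3) * a 0 0 * a 0 1 * a 0 1) * q01 + (((-8 : K)/3) * b 0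 1 * b 0 1 * b 0 1 + (-4 : K) * a 0 1 * b 0 1 * b 0 1 + (4 : K) * a 0 1 * a 0 1 * b 0 1 + ((8 : K)/3) * a 0 1 * a 0 1 * a 0 1) * q11
    exact pow_eq_zero_iff (three_ne_zero) |>.mp key
  have k10 : (a * b) 1 0 - (b * a) 1 0 = 0 := by
    have key : ((a * b) 1 0 - (b * a) 1 0) ^ 3 = 0 := by
      simp only [Matrix.mul_apply, Fin.sum_univ_two]
      linear_combination (((-11 : K)/12) * b 1 0 * b 1 0 * b 1 0 * b 1 1 + ((-11 : K)/12) * b 0 0 * b 1 0 * b 1 0 * b 1 0 + ((37 : K)/24) * a 1 1 * b 1 0 * b 1 0 * b 1 0 + ((-103 : K)/24) * a 1 0 * b 1 0 * b 1 0 * b 1 1 + ((-71 : K)/24) * a 1 0 * b 0 0 * b 1 0 * b 1 0 + ((1 : K)/6) * a 1 0 * a 1 1 * b 1 0 * b 1 0 + ((-35 : K)/12) * a 1 0 * a 1 0 * b 1 0 * b 1 1 + ((-19 : K)/12) * a 1 0 * a 1 0 * b 0 0 * b 1 0 + ((1 : K)/6) * a 1 0 * a 1 0 * a 1 1 * b 1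 0 + (-2 : K) * a 1 0 * a 1 0 * a 1 0 * b 1 1 + ((-2 : K)/3) * a 1 0 * a 1 0 * a 1 0 * b 0 0 + ((5 : K)/24) * a 0 0 * b 1 0 * b 1 0 * b 1 0 + ((-7 : K)/6) * a 0 0 * a 1 0 * b 1 0 * b 1 0 + ((-7 : K)/6) * a 0 0 * a 1 0 * a 1 0 * b 1 0) * p00 + (((-7 : K)/6) * b 1 0 * b 1 0 * b 1 1 * b 1 1 + ((-1 : K)/4) * b 0 1 * b 1 0 * b 1 0 * b 1 0 + ((11 : K)/12) * b 0 0 * b 0 0 * b 1 0 * b 1 0 + (1 : K) * a 1 1 * b 1 0 * b 1 0 * b 1 1 + ((-7 : K)/12) * a 1 1 * b 0 0 * b 1 0 * b 1 0 + ((-1 : K)/12) * a 1 1 * a 1 1 * b 1 0 * b 1 0 + ((-17 : K)/4) * a 1 0 * b 1 0 * b 1 1 * b 1 1 + ((-11 : K)/24) * a 1 0 * b 0 1 * b 1 0 * b 1 0 + ((1 : K)/12) * a 1 0 * b 0 0 * b 1 0 * b 1 1 + ((47 : K)/12) * a 1 0 * b 0 0 * b 0 0 * b 1 0 + ((-11 :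 K)/6) * a 1 0 * a 1 1 * b 1 0 * b 1 1 + ((-5 : K)/12) * a 1 0 * a 1 1 * b 0 0 * b 1 0 + ((-1 : K)/6) * a 1 0 * a 1 1 * a 1 1 * b 1 0 + ((-5 : K)/6) * a 1 0 * a 1 0 * b 1 1 * b 1 1 + ((1 : K)/6) * a 1 0 * a 1 0 * b 0 1 * b 1 0 + ((1 : K)/6) * a 1 0 * a 1 0 * b 0 0 * b 1 1 + ((7 : K)/6) * a 1 0 * a 1 0 * b 0 0 * b 0 0 + ((-5 : K)/3) * a 1 0 * a 1 0 * a 1 1 * b 1 1 + ((-1 : K)/2) * a 1 0 * a 1 0 * a 1 1 * b 0 0 + ((1 : K)/6) * a 1 0 * a 1 0 * a 1 0 * b 0 1 + ((-1 : K)/24) * a 0 1 * b 1 0 * b 1 0 * b 1 0 + ((-1 : K)/6) * a 0 1 * a 1 0 * b 1 0 * b 1 0 + ((-1 : K)/6) * a 0 1 * a 1 0 * a 1 0 * b 1 0 + ((3 : K)/4) * a 0 0 * b 1 0 * b 1 0 * b 1 1 + ((-11 : K)/12) * a 0 0 * b 0 0 * b 1 0 * b 1 0 + ((1 : K)/12)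 * a 0 0 * a 1 1 * b 1 0 * b 1 0 + ((11 : K)/12) * a 0 0 * a 1 0 * b 1 0 * b 1 1 + ((7 : K)/3) * a 0 0 * a 1 0 * b 0 0 * b 1 0 + ((1 : K)/6) * a 0 0 * a 1 0 * a 1 1 * b 1 0 + ((5 : K)/6) * a 0 0 * a 1 0 * a 1 0 * b 1 1 + ((7 : K)/3) * a 0 0 * a 1 0 * a 1 0 * b 0 0) * p10 + (((7 : K)/6) * b 1 0 * b 1 0 * b 1 0 * b 1 1 + ((7 : K)/6) * b 0 0 * b 1 0 * b 1 0 * b 1 0 + ((-1 : K)/12) * a 1 1 * b 1 0 * b 1 0 * b 1 0 + ((43 : K)/12) * a 1 0 * b 1 0 * b 1 0 * b 1 1 + ((59 : K)/12) * a 1 0 * b 0 0 * b 1 0 * b 1 0 + ((5 : K)/3) * a 1 0 * a 1 1 * b 1 0 * b 1 0 + ((11 : K)/6) * a 1 0 * a 1 0 * b 1 0 * b 1 1 + ((19 : K)/6) * a 1 0 * a 1 0 * b 0 0 * b 1 0 + ((5 : K)/3) * a 1 0 * a 1 0 * a 1 1 * b 1 0 + ((2 : K)/3) * a 1 0 * a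 1 0 * a 1 0 * b 1 1 + (2 : K) * a 1 0 * a 1 0 * a 1 0 * b 0 0 + ((-17 : K)/12) * a 0 0 * b 1 0 * b 1 0 * b 1 0 + ((1 : K)/3) * a 0 0 * a 1 0 * b 1 0 * b 1 0 + ((1 : K)/3) * a 0 0 * a 1 0 * a 1 0 * b 1 0) * p11 + (((-8 : K)/3) * b 1 0 * b 1 0 * b 1 0 + (-4 : K) * a 1 0 * b 1 0 * b 1 0 + (4 : K) * a 1 0 * a 1 0 * b 1 0 + ((8 : K)/3) * a 1 0 * a 1 0 * a 1 0) * q00 + (((-5 : K)/2) * b 1 0 * b 1 0 * b 1 1 + ((17 : K)/6) * b 0 0 * b 1 0 * b 1 0 + ((-5 : K)/4) * a 1 1 * b 1 0 * b 1 0 + ((-9 : K)/4) * a 1 0 * b 1 0 * b 1 1 + ((37 : K)/12) * a 1 0 * b 0 0 * b 1 0 + (3 : K) * a 1 0 * a 1 1 * b 1 0 + ((3 : K)/2) * a 1 0 * a 1 0 * b 1 1 + ((-7 : K)/6) * a 1 0 * a 1 0 * b 0 0 + (3 : K) * a 1 0 * a 1 0 * a 1 1 + ((17 : K)/12) * a 0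 0 * b 1 0 * b 1 0 + ((-7 : K)/3) * a 0 0 * a 1 0 * b 1 0 + ((-7 : K)/3) * a 0 0 * a 1 0 * a 1 0) * q10 + (((8 : K)/3) * b 1 0 * b 1 0 * b 1 0 + (4 : K) * a 1 0 * b 1 0 * b 1 0 + (-4 : K) * a 1 0 * a 1 0 * b 1 0 + ((-8 : K)/3) * a 1 0 * a 1 0 * a 1 0) * q11
    exact pow_eq_zero_iff (three_ne_zero) |>.mp key
  have k11 : (a * b) 1 1 - (b * a) 1 1 = 0 := by
    have key : ((a * b) 1 1 - (b * a) 1 1) ^ 3 = 0 := by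
      simp only [Matrix.mul_apply, Fin.sum_univ_two]
      linear_combination (((-1 : K)/12) * b 0 1 * b 1 0 * b 1 1 * b 1 1 + ((15 : K)/4) * b 0 1 * b 0 1 * b 1 0 * b 1 0 + ((-49 : K)/12) * b 0 0 * b 0 1 * b 1 0 * b 1 1 + ((-1 : K)/4) * b 0 0 * b 0 0 * b 0 1 * b 1 0 + ((1 : K)/4) * a 1 1 * b 0 1 * b 1 0 * b 1 1 + ((-23 : K)/12) * a 1 1 * b 0 0 * b 0 1 * b 1 0 + ((-2 : K)/3) * a 1 1 * a 1 1 * b 0 1 * b 1 0 + ((-17 : K)/12) * a 1 0 * b 0 1 * b 1 1 * b 1 1 + (1 : K) * a 1 0 * b 0 1 * b 0 1 * b 1 0 + (-1 : K) * a 1 0 * b 0 0 * b 0 1 * b 1 1 + ((-1 : K)/2) * a 1 0 * a 1 1 * b 0 1 * b 1 1 + ((1 : K)/2) * a 1 0 * a 1 1 * b 0 0 * b 0 1 + ((-1 : K)/3) * a 1 0 * a 1 1 * a 1 1 * b 0 1 + ((7 : K)/6) * a 0 1 * b 1 0 * b 1 1 * b 1 1 + ((13 : K)/2) * a 0 1 *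 b 0 1 * b 1 0 * b 1 0 + ((-47 : K)/12) * a 0 1 * b 0 0 * b 1 0 * b 1 1 + (-2 : K) * a 0 1 * b 0 0 * b 0 0 * b 1 0 + ((5 : K)/6) * a 0 1 * a 1 1 * b 1 0 * b 1 1 + ((-5 : K)/6) * a 0 1 * a 1 1 * b 0 0 * b 1 0 + (-1 : K) * a 0 1 * a 1 1 * a 1 1 * b 1 0 + ((5 : K)/6) * a 0 1 * a 1 0 * b 1 1 * b 1 1 + ((-1 : K)/2) * a 0 1 * a 1 0 * b 0 0 * b 1 1 + ((5 : K)/3) * a 0 1 * a 1 0 * a 1 1 * b 1 1 + (-1 : K) * a 0 1 * a 1 0 * a 1 1 * b 0 0 + ((-7 : K)/6) * a 0 0 * b 0 1 * b 1 0 * b 1 1 + ((3 : K)/2) * a 0 0 * b 0 0 * b 0 1 * b 1 0 + ((2 : K)/3) * a 0 0 * a 1 1 * b 0 1 * b 1 0 + ((1 : K)/2) * a 0 0 * a 1 0 * b 0 1 * b 1 1 + (1 : K) * a 0 0 * a 1 0 * a 1 1 * b 0 1 + ((1 : K)/6) * a 0 0 * a 0 1 * b 1 0 * b 1 1 + ((1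 : K)/3) * a 0 0 * a 0 1 * a 1 1 * b 1 0) * p00 + (((-41 : K)/12) * b 1 0 * b 1 1 * b 1 1 * b 1 1 + ((-21 : K)/4) * b 0 1 * b 1 0 * b 1 0 * b 1 1 + ((-3 : K)/4) * b 0 0 * b 1 0 * b 1 1 * b 1 1 + ((-23 : K)/6) * b 0 0 * b 0 1 * b 1 0 * b 1 0 + ((5 : K)/4) * b 0 0 * b 0 0 * b 1 0 * b 1 1 + ((1 : K)/3) * a 1 1 * b 1 0 * b 1 1 * b 1 1 + ((14 : K)/3) * a 1 1 * b 0 1 * b 1 0 * b 1 0 + ((-15 : K)/4) * a 1 1 * b 0 0 * b 1 0 * b 1 1 + ((1 : K)/2) * a 1 1 * b 0 0 * b 0 0 * b 1 0 + ((-2 : K)/3) * a 1 1 * a 1 1 * b 1 0 * b 1 1 + ((-3 : K)/2) * a 1 1 * a 1 1 * b 0 0 * b 1 0 + (-1 : K) * a 1 1 * a 1 1 * a 1 1 * b 1 0 + ((-22 : K)/3) * a 1 0 * b 1 1 * b 1 1 * b 1 1 + ((-73 : K)/6) * a 1 0 * b 0 1 * b 1 0 * b 1 1 + (3 : K) * a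 1 0 * b 0 0 * b 1 1 * b 1 1 + ((-5 : K)/6) * a 1 0 * b 0 0 * b 0 1 * b 1 0 + ((-1 : K)/3) * a 1 0 * a 1 1 * b 1 1 * b 1 1 + ((10 : K)/3) * a 1 0 * a 1 1 * b 0 1 * b 1 0 + ((-1 : K)/3) * a 1 0 * a 1 1 * a 1 1 * b 1 1 + (-2 : K) * a 1 0 * a 1 1 * a 1 1 * b 0 0 + ((1 : K)/6) * a 1 0 * a 1 0 * b 0 1 * b 1 1 + ((1 : K)/6) * a 1 0 * a 1 0 * b 0 0 * b 0 1 + (2 : K) * a 1 0 * a 1 0 * a 1 1 * b 0 1 + (-2 : K) * a 0 1 * b 1 0 * b 1 0 * b 1 1 + ((-5 : K)/3) * a 0 1 * b 0 0 * b 1 0 * b 1 0 + ((1 : K)/3) * a 0 1 * a 1 1 * b 1 0 * b 1 0 + ((-4 : K)/3) * a 0 1 * a 1 0 * b 1 0 * b 1 1 + ((4 : K)/3) * a 0 1 * a 1 0 * b 0 0 * b 1 0 + ((2 : K)/3) * a 0 1 * a 1 0 * a 1 1 * b 1 0 + ((-5 : K)/3) * a 0 1 * a 1 0 * a 1 0 *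 b 1 1 + ((4 : K)/3) * a 0 1 * a 1 0 * a 1 0 * b 0 0 + ((-5 : K)/4) * a 0 0 * b 1 0 * b 1 1 * b 1 1 + (-5 : K) * a 0 0 * b 0 1 * b 1 0 * b 1 0 + ((5 : K)/2) * a 0 0 * b 0 0 * b 1 0 * b 1 1 + ((-1 : K)/2) * a 0 0 * a 1 1 * b 1 0 * b 1 1 + (1 : K) * a 0 0 * a 1 1 * b 0 0 * b 1 0 + (-1 : K) * a 0 0 * a 1 0 * b 0 1 * b 1 0 + (-1 : K) * a 0 0 * a 1 0 * a 1 0 * b 0 1) * p01 + (((10 : K)/3) * b 0 1 * b 1 1 * b 1 1 * b 1 1 + (9 : K) * b 0 1 * b 0 1 * b 1 0 * b 1 1 + ((-13 : K)/4) * b 0 0 * b 0 1 * b 1 1 * b 1 1 + ((1 : K)/12) * b 0 0 * b 0 1 * b 0 1 * b 1 0 + ((31 : K)/12) * b 0 0 * b 0 0 * b 0 1 * b 1 1 + ((1 : K)/4) * b 0 0 * b 0 0 * b 0 0 * b 0 1 + ((-8 : K)/3) * a 1 1 * b 0 1 * b 0 1 * b 1 0 + ((-2 : K)/3) * a 1 1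 * b 0 0 * b 0 1 * b 1 1 + ((17 : K)/12) * a 1 1 * b 0 0 * b 0 0 * b 0 1 + ((-1 : K)/2) * a 1 1 * a 1 1 * b 0 1 * b 1 1 + ((13 : K)/6) * a 1 1 * a 1 1 * b 0 0 * b 0 1 + ((-1 : K)/3) * a 1 1 * a 1 1 * a 1 1 * b 0 1 + ((53 : K)/12) * a 1 0 * b 0 1 * b 0 1 * b 1 1 + ((-13 : K)/12) * a 1 0 * b 0 0 * b 0 1 * b 0 1 + (-1 : K) * a 1 0 * a 1 1 * b 0 1 * b 0 1 + (7 : K) * a 0 1 * b 1 1 * b 1 1 * b 1 1 + ((61 : K)/4) * a 0 1 * b 0 1 * b 1 0 * b 1 1 + ((-16 : K)/3) * a 0 1 * b 0 0 * b 1 1 * b 1 1 + ((-23 : K)/12) * a 0 1 * b 0 0 * b 0 1 * b 1 0 + ((2 : K)/3) * a 0 1 * b 0 0 * b 0 0 * b 1 1 + (2 : K) * a 0 1 * b 0 0 * b 0 0 * b 0 0 + (2 : K) * a 0 1 * a 1 1 * b 1 1 * b 1 1 + ((-8 : K)/3) * a 0 1 * a 1 1 * b 0 1 * b 1 0 + ((-5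 : K)/3) * a 0 1 * a 1 1 * b 0 0 * b 1 1 + ((1 : K)/3) * a 0 1 * a 1 1 * b 0 0 * b 0 0 + (2 : K) * a 0 1 * a 1 1 * a 1 1 * b 1 1 + (1 : K) * a 0 1 * a 1 1 * a 1 1 * b 0 0 + ((2 : K)/3) * a 0 1 * a 1 0 * b 0 1 * b 1 1 + ((-5 : K)/6) * a 0 1 * a 1 0 * b 0 0 * b 0 1 + (-2 : K) * a 0 1 * a 1 0 * a 1 1 * b 0 1 + ((1 : K)/2) * a 0 1 * a 0 1 * b 1 0 * b 1 1 + ((-2 : K)/3) * a 0 1 * a 0 1 * b 0 0 * b 1 0 + ((-2 : K)/3) * a 0 1 * a 0 1 * a 1 1 * b 1 0 + ((5 : K)/3) * a 0 1 * a 0 1 * a 1 0 * b 1 1 + ((-4 : K)/3) * a 0 1 * a 0 1 * a 1 0 * b 0 0 + (3 : K) * a 0 0 * b 0 1 * b 0 1 * b 1 0 + ((29 : K)/12) * a 0 0 * b 0 0 * b 0 1 * b 1 1 + ((-3 : K)/2) * a 0 0 * b 0 0 * b 0 0 * b 0 1 + ((13 : K)/6) * a 0 0 * a 1 1 * b 0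 1 * b 1 1 + ((-5 : K)/3) * a 0 0 * a 1 1 * b 0 0 * b 0 1 + ((7 : K)/3) * a 0 0 * a 1 1 * a 1 1 * b 0 1 + ((1 : K)/2) * a 0 0 * a 1 0 * b 0 1 * b 0 1 + ((-2 : K)/3) * a 0 0 * a 0 1 * b 1 1 * b 1 1 + ((1 : K)/2) * a 0 0 * a 0 1 * b 0 1 * b 1 0 + ((1 : K)/3) * a 0 0 * a 0 1 * b 0 0 * b 1 1 + ((-4 : K)/3) * a 0 0 * a 0 1 * a 1 1 * b 1 1 + ((2 : K)/3) * a 0 0 * a 0 1 * a 1 1 * b 0 0 + (1 : K) * a 0 0 * a 0 1 * a 1 0 * b 0 1 + ((-1 : K)/2) * a 0 0 * a 0 0 * b 0 1 * b 1 1 + (-1 : K) * a 0 0 * a 0 0 * a 1 1 * b 0 1) * p10 + (((1 : K)/12) * b 0 1 * b 1 0 * b 1 1 * b 1 1 + ((-15 : K)/4) * b 0 1 * b 0 1 * b 1 0 * b 1 0 + ((49 : K)/12) * b 0 0 * b 0 1 * b 1 0 * b 1 1 + ((1 : K)/4) * b 0 0 * b 0 0 * b 0 1 * b 1 0 + ((-7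 : K)/12) * a 1 1 * b 0 1 * b 1 0 * b 1 1 + ((23 : K)/12) * a 1 1 * b 0 0 * b 0 1 * b 1 0 + ((1 : K)/2) * a 1 1 * a 1 1 * b 0 1 * b 1 0 + ((13 : K)/2) * a 1 0 * b 0 1 * b 1 1 * b 1 1 + (-2 : K) * a 1 0 * b 0 1 * b 0 1 * b 1 0 + ((65 : K)/12) * a 1 0 * b 0 0 * b 0 1 * b 1 1 + ((7 : K)/6) * a 1 0 * a 1 1 * b 0 1 * b 1 1 + ((-7 : K)/6) * a 1 0 * a 1 1 * b 0 0 * b 0 1 + ((4 : K)/3) * a 1 0 * a 1 1 * a 1 1 * b 0 1 + ((-71 : K)/12) * a 0 1 * b 1 0 * b 1 1 * b 1 1 + ((-11 : K)/2) * a 0 1 * b 0 1 * b 1 0 * b 1 0 + ((-5 : K)/6) * a 0 1 * b 0 0 * b 1 0 * b 1 1 + (2 : K) * a 0 1 * b 0 0 * b 0 0 * b 1 0 + ((-3 : K)/2) * a 0 1 * a 1 1 * b 1 0 * b 1 1 + ((4 : K)/3) * a 0 1 * a 1 1 * b 0 0 * b 1 0 + ((-1 : K)/3) * a 0 1 * a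 1 1 * a 1 1 * b 1 0 + ((-2 : K)/3) * a 0 1 * a 1 0 * b 1 1 * b 1 1 + ((1 : K)/3) * a 0 1 * a 1 0 * b 0 0 * b 1 1 + ((-4 : K)/3) * a 0 1 * a 1 0 * a 1 1 * b 1 1 + ((2 : K)/3) * a 0 1 * a 1 0 * a 1 1 * b 0 0 + ((3 : K)/2) * a 0 0 * b 0 1 * b 1 0 * b 1 1 + ((-3 : K)/2) * a 0 0 * b 0 0 * b 0 1 * b 1 0 + ((-1 : K)/2) * a 0 0 * a 1 1 * b 0 1 * b 1 0 + ((-1 : K)/2) * a 0 0 * a 1 0 * b 0 1 * b 1 1 + (-1 : K) * a 0 0 * a 1 0 * a 1 1 * b 0 1) * p11 + (((5 : K)/12) * b 0 1 * b 1 0 * b 1 1 + ((-1 : K)/4) * b 0 0 * b 0 1 * b 1 0 + ((-13 : K)/6) * a 1 1 * b 0 1 * b 1 0 + ((11 : K)/6) * a 1 0 * b 0 1 * b 1 1 + ((-4 : K)/3) * a 1 0 * a 1 1 * b 0 1 + ((5 : K)/6) * a 0 1 * b 1 0 * b 1 1 + (-2 : K) * a 0 1 * b 0 0 * b 1 0 +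 ((2 : K)/3) * a 0 1 * a 1 1 * b 1 0 + ((-1 : K)/3) * a 0 1 * a 1 0 * b 1 1 + ((-2 : K)/3) * a 0 1 * a 1 0 * a 1 1 + ((3 : K)/2) * a 0 0 * b 0 1 * b 1 0) * q00 + (((-5 : K)/4) * b 1 0 * b 1 1 * b 1 1 + (2 : K) * b 0 1 * b 1 0 * b 1 0 + ((-5 : K)/4) * b 0 0 * b 1 0 * b 1 1 + (1 : K) * a 1 1 * b 1 0 * b 1 1 + ((-1 : K)/2) * a 1 1 * b 0 0 * b 1 0 + (2 : K) * a 1 1 * a 1 1 * b 1 0 + (-3 : K) * a 1 0 * b 1 1 * b 1 1 + (3 : K) * a 1 0 * b 0 1 * b 1 0 + (2 : K) * a 1 0 * a 1 1 * a 1 1 + (1 : K) * a 0 1 * b 1 0 * b 1 0 + ((-5 : K)/2) * a 0 0 * b 1 0 * b 1 1 + (-1 : K) * a 0 0 * a 1 1 * b 1 0) * q01 + (((5 : K)/3) * b 0 1 * b 1 1 * b 1 1 + (-2 : K) * b 0 1 * b 0 1 * b 1 0 + ((7 : K)/12) * b 0 0 * b 0 1 * b 1 1 + ((1 : K)/4)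 * b 0 0 * b 0 0 * b 0 1 + ((7 : K)/6) * a 1 1 * b 0 1 * b 1 1 + ((8 : K)/3) * a 1 1 * b 0 0 * b 0 1 + ((-7 : K)/3) * a 1 1 * a 1 1 * b 0 1 + (-1 : K) * a 1 0 * b 0 1 * b 0 1 + ((4 : K)/3) * a 0 1 * b 1 1 * b 1 1 + (-3 : K) * a 0 1 * b 0 1 * b 1 0 + ((-1 : K)/3) * a 0 1 * b 0 0 * b 1 1 + (2 : K) * a 0 1 * b 0 0 * b 0 0 + ((-2 : K)/3) * a 0 1 * a 1 1 * b 1 1 + ((1 : K)/3) * a 0 1 * a 1 1 * b 0 0 + ((-8 : K)/3) * a 0 1 * a 1 1 * a 1 1 + ((-1 : K)/3) * a 0 0 * b 0 1 * b 1 1 + ((-3 : K)/2) * a 0 0 * b 0 0 * b 0 1 + ((4 : K)/3) * a 0 0 * a 1 1 * b 0 1 + ((1 : K)/3) * a 0 0 * a 0 1 * b 1 1 + ((2 : K)/3) * a 0 0 * a 0 1 * a 1 1) * q10 + (((-5 : K)/12) * b 0 1 * b 1 0 * b 1 1 + ((1 : K)/4) * b 0 0 * b 0 1 * b 1 0 +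 ((-11 : K)/6) * a 1 1 * b 0 1 * b 1 0 + ((31 : K)/6) * a 1 0 * b 0 1 * b 1 1 + ((4 : K)/3) * a 1 0 * a 1 1 * b 0 1 + ((-23 : K)/6) * a 0 1 * b 1 0 * b 1 1 + (-2 : K) * a 0 1 * b 0 0 * b 1 0 + ((-2 : K)/3) * a 0 1 * a 1 1 * b 1 0 + ((1 : K)/3) * a 0 1 * a 1 0 * b 1 1 + ((2 : K)/3) * a 0 1 * a 1 0 * a 1 1 + ((5 : K)/2) * a 0 0 * b 0 1 * b 1 0) * q11
    exact pow_eq_zero_iff (three_ne_zero) |>.mp key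
  have hab : a * b = b * a := by
    ext i j
    fin_cases i <;> fin_cases j
    · exact sub_eq_zero.mp k00
    · exact sub_eq_zero.mp k01
    · exact sub_eq_zero.mp k10
    · exact sub_eq_zero.mp k11
  refine ⟨hab, ?_, ?_⟩ <;>
    simp only [mul_neg, neg_mul, mul_add, add_mul, hab]
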